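/- Let F : C ⇄ D : G be a symmetric monoidal adjunction between symmetric monoidal closed categories with F strong symmetric monoidal and η : id → G∘F the unit. If X is a dualizable object of C, then there is a natural isomorphism G(F(X)) ≅ G(F(𝟙)) ⊗ X. Consequently, if η_𝟙 is an isomorphism then η_X is an isomorphism for every dualizable X. -/

import Mathlib

open CategoryTheory MonoidalCategory Functor.LaxMonoidal Functor.OplaxMonoidal Functor.Monoidal

section Aux

variable {C D : Type*} [Category C] [Category D] [MonoidalCategory C] [MonoidalCategory D]

/-- A monoidal functor sends exact pairings to exact pairings. -/
def mapExactPairing (F : C ⥤ D) [F.Monoidal] (A B : C) [ExactPairing A B] :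
    ExactPairing (F.obj A) (F.obj B) where
  coevaluation' := ε F ≫ F.map (η_ A B) ≫ δ F A B
  evaluation' := μ F B A ≫ F.map (ε_ A B) ≫ η F
  coevaluation_evaluation' := by
    have h := F.congr_map (ExactPairing.coevaluation_evaluation' (X := A) (Y := B))
    simp only [F.map_comp, Functor.Monoidal.map_whiskerLeft, Functor.Monoidal.map_associator_inv,
      Functor.Monoidal.map_whiskerRight, Functor.Monoidal.map_rightUnitor,
      Functor.Monoidal.map_leftUnitor_inv, Category.assoc, Functor.Monoidal.μ_δ_assoc] at h
    rw [cancel_epi] at h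
    simp only [← Category.assoc] at h
    rw [cancel_mono] at h
    simp only [Category.assoc] at h
    show F.obj B ◁ (ε F ≫ F.map (η_ A B) ≫ δ F A B) ≫ _ ≫
      (μ F B A ≫ F.map (ε_ A B) ≫ η F) ▷ F.obj B = _
    simp only [MonoidalCategory.whiskerLeft_comp, MonoidalCategory.comp_whiskerRight,
      Category.assoc]
    rw [show (η_ A B) = ExactPairing.coevaluation' from rfl,
      show (ε_ A B) = ExactPairing.evaluation' from rfl, reassoc_of% h]
    simp
  evaluation_coevaluation' := by
    have h := F.congr_map (ExactPairing.evaluation_coevaluation' (X := A) (Y := B))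
    simp only [F.map_comp, Functor.Monoidal.map_whiskerLeft, Functor.Monoidal.map_associator,
      Functor.Monoidal.map_whiskerRight, Functor.Monoidal.map_rightUnitor_inv,
      Functor.Monoidal.map_leftUnitor, Category.assoc, Functor.Monoidal.μ_δ_assoc] at h
    rw [cancel_epi] at h
    simp only [← Category.assoc] at h
    rw [cancel_mono] at h
    simp only [Category.assoc] at h
    show (ε F ≫ F.map (η_ A B) ≫ δ F A B) ▷ F.obj A ≫ _ ≫
      F.obj A ◁ (μ F B A ≫ F.map (ε_ A B) ≫ η F) = _
    simp only [MonoidalCategory.whiskerLeft_comp, MonoidalCategory.comp_whiskerRight,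
      Category.assoc]
    rw [show (η_ A B) = ExactPairing.coevaluation' from rfl,
      show (ε_ A B) = ExactPairing.evaluation' from rfl, reassoc_of% h]
    simp

/-- Compatibility of `tensorRightHomEquiv` with a monoidal functor. -/
lemma mapExactPairing_key (F : C ⥤ D) [F.Monoidal] (A B : C) [ExactPairing A B] (Z : C)
    (g : Z ⊗ A ⟶ 𝟙_ C) :
    letI := mapExactPairing F A B
    F.map ((tensorRightHomEquiv Z A B (𝟙_ C)) g ≫ (λ_ B).hom) =
      (tensorRightHomEquiv (F.obj Z) (F.obj A) (F.obj B) (F.obj (𝟙_ C)))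
          (μ F Z A ≫ F.map g) ≫ μ F (𝟙_ C) B ≫ F.map (λ_ B).hom := by
  dsimp [tensorRightHomEquiv, mapExactPairing, ExactPairing.coevaluation]
  erw [Equiv.coe_fn_mk, Equiv.coe_fn_mk]
  rw [show @ExactPairing.coevaluation' _ _ _ _ _ (mapExactPairing F A B) =
    ε F ≫ F.map (ExactPairing.coevaluation' (X := A) (Y := B)) ≫ δ F A B from rfl]
  simp only [F.map_comp, Functor.Monoidal.map_rightUnitor_inv, Functor.Monoidal.map_whiskerLeft,
    Functor.Monoidal.map_associator_inv, Functor.Monoidal.map_whiskerRight,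
    Functor.Monoidal.map_leftUnitor, Category.assoc, Functor.Monoidal.μ_δ_assoc,
    Functor.Monoidal.δ_μ_assoc, MonoidalCategory.whiskerLeft_comp,
    MonoidalCategory.comp_whiskerRight]

/-- For an adjunction `F ⊣ G`, the unit is an isomorphism at `W` iff `F` is "fully faithful
at `W`". -/
lemma unit_isIso_iff_bijective {F : C ⥤ D} {G : D ⥤ C} (adj : F ⊣ G) (W : C) :
    IsIso (adj.unit.app W) ↔
      ∀ Z : C, Function.Bijective (fun f : Z ⟶ W => F.map f) := by
  rw [isIso_iff_yoneda_map_bijective]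
  simp only [Functor.id_obj, Functor.comp_obj]
  have key : ∀ (Z : C), (fun x : Z ⟶ W => x ≫ adj.unit.app W) =
      (fun f : Z ⟶ W => adj.homEquiv Z (F.obj W) (F.map f)) := by
    intro Z
    funext x
    simp [Adjunction.homEquiv_unit]
  constructor
  · intro h Z
    have hZ := h Z
    rw [key Z] at hZ
    exact (Function.Bijective.of_comp_iff' (adj.homEquiv Z (F.obj W)).bijective
      (fun f : Z ⟶ W => F.map f)).mp hZ
  · intro h Z
    rw [key Z]
    exact (adj.homEquiv Z (F.obj W)).bijective.comp (h Z)

end Aux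

/-- Let `F ⊣ G` be a symmetric monoidal adjunction between symmetric monoidal closed
categories, with `F` strong symmetric monoidal and unit `η`.  If `X` is dualizable, then
`G(F(X)) ≅ G(F(𝟙)) ⊗ X`; consequently, if `η` is an isomorphism at the monoidal unit,
then it is an isomorphism at every dualizable `X`. -/
theorem stmt3 {C D : Type*} [Category C] [Category D]
    [MonoidalCategory C] [SymmetricCategory C] [MonoidalClosed C]
    [MonoidalCategory D] [SymmetricCategory D] [MonoidalClosed D]
    (F : C ⥤ D) [F.Braided] (G : D ⥤ C) (adj : F ⊣ G)
    (X : C) [HasLeftDual X] :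
    Nonempty (G.obj (F.obj X) ≅ G.obj (F.obj (𝟙_ C)) ⊗ X) ∧
      (IsIso (adj.unit.app (𝟙_ C)) → IsIso (adj.unit.app X)) := by
  letI epD : ExactPairing (F.obj (ᘁX)) (F.obj X) := mapExactPairing F (ᘁX) X
  constructor
  · -- the natural isomorphism, via uniqueness of right adjoints
    let adjC : tensorRight (ᘁX) ⊣ tensorRight X := tensorRightAdjunction (ᘁX) X
    let adjD : tensorRight (F.obj (ᘁX)) ⊣ tensorRight (F.obj X) :=
      tensorRightAdjunction (F.obj (ᘁX)) (F.obj X)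
    let adjA : (tensorRight (ᘁX) ⋙ F) ⊣ (tensorRight (F.obj X) ⋙ G) :=
      (adj.comp adjD).ofNatIsoLeft (Functor.Monoidal.commTensorRight F (ᘁX))
    let adjB : (tensorRight (ᘁX) ⋙ F) ⊣ (G ⋙ tensorRight X) := adjC.comp adj
    let i : tensorRight (F.obj X) ⋙ G ≅ G ⋙ tensorRight X := adjA.rightAdjointUniq adjB
    exact ⟨G.mapIso (F.mapIso (λ_ X).symm ≪≫ (Functor.Monoidal.μIso F (𝟙_ C) X).symm) ≪≫
      i.app (F.obj (𝟙_ C))⟩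
  · intro h
    rw [unit_isIso_iff_bijective] at h ⊢
    intro Z
    have hF : Function.Bijective (fun f : Z ⊗ (ᘁX) ⟶ 𝟙_ C => F.map f) := h _
    have key : (fun f : Z ⟶ X => F.map f) =
        (fun g : F.obj Z ⟶ F.obj (𝟙_ C) ⊗ F.obj X =>
            g ≫ (μ F (𝟙_ C) X ≫ F.map (λ_ X).hom)) ∘
        ⇑(tensorRightHomEquiv (F.obj Z) (F.obj (ᘁX)) (F.obj X) (F.obj (𝟙_ C))) ∘
        (fun g : F.obj (Z ⊗ (ᘁX)) ⟶ F.obj (𝟙_ C) => μ F Z (ᘁX) ≫ g) ∘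
        (fun g : Z ⊗ (ᘁX) ⟶ 𝟙_ C => F.map g) ∘
        ⇑(tensorRightHomEquiv Z (ᘁX) X (𝟙_ C)).symm ∘
        (fun f : Z ⟶ X => f ≫ (λ_ X).inv) := by
      funext f
      have := mapExactPairing_key F (ᘁX) X Z
        ((tensorRightHomEquiv Z (ᘁX) X (𝟙_ C)).symm (f ≫ (λ_ X).inv))
      simp only [Equiv.apply_symm_apply] at this
      simpa using this
    rw [key]
    have h1 : Function.Bijective (fun g : F.obj Z ⟶ F.obj (𝟙_ C) ⊗ F.obj X =>
        g ≫ (μ F (𝟙_ C) X ≫ F.map (λ_ X).hom)) :=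
      (isIso_iff_yoneda_map_bijective (μ F (𝟙_ C) X ≫ F.map (λ_ X).hom)).mp
        inferInstance (F.obj Z)
    have h2 : Function.Bijective (fun g : F.obj (Z ⊗ (ᘁX)) ⟶ F.obj (𝟙_ C) =>
        μ F Z (ᘁX) ≫ g) :=
      (isIso_iff_coyoneda_map_bijective (μ F Z (ᘁX))).mp inferInstance (F.obj (𝟙_ C))
    have h3 : Function.Bijective (fun f : Z ⟶ X => f ≫ (λ_ X).inv) :=
      (isIso_iff_yoneda_map_bijective ((λ_ X).inv)).mp inferInstance Z
    exact h1.comp ((tensorRightHomEquiv (F.obj Z) (F.obj (ᘁX)) (F.obj X)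
      (F.obj (𝟙_ C))).bijective.comp (h2.comp (hF.comp
      ((tensorRightHomEquiv Z (ᘁX) X (𝟙_ C)).symm.bijective.comp h3))))
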